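/- Let K be a field and L = K(T_2,...,T_r). Let f ∈ K[T_1,...,T_r] be a polynomial with positive T_1-degree whose leading coefficient a := LC_{T_1}(f) satisfies a(x) ≠ 0 for a given point x = (x_1,...,x_r) ∈ K̄^r with f(x) = 0. Writing f = c·∏_{j=1}^n (T_1 − t_j) over the algebraic closure L̄ of L (possible since f has positive degree in T_1 over L), and letting ε be a place of L̄ over K̄ extending evaluation at (x_2,...,x_r) with all t_j-relevant elements considered, then there exists j such that t_j lies in the valuation ring of ε and ε(t_j) = x_1. -/

import Mathlib

section helpers
variable {R S : Type*} [Field R] [Field S] {A : Subring R} {ε : A →+* S}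

lemma place_inv_mem (hplace : ∀ z, z ∉ A → ∃ hz : z⁻¹ ∈ A, ε ⟨z⁻¹, hz⟩ = 0)
    {z : R} (hz : z ∈ A) (hne : ε ⟨z, hz⟩ ≠ 0) :
    ∃ h : z⁻¹ ∈ A, ε ⟨z⁻¹, h⟩ = (ε ⟨z, hz⟩)⁻¹ := by
  have hz0 : z ≠ 0 := by
    rintro rfl
    exact hne (by rw [show (⟨(0:R), hz⟩ : A) = 0 from rfl, map_zero])
  have hinv : z⁻¹ ∈ A := by
    by_contra hni
    obtain ⟨h, he⟩ := hplace _ hni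
    have : (⟨(z⁻¹)⁻¹, h⟩ : A) = ⟨z, hz⟩ := Subtype.ext (inv_inv z)
    rw [this] at he
    exact hne he
  refine ⟨hinv, ?_⟩
  have hmul : (⟨z, hz⟩ : A) * ⟨z⁻¹, hinv⟩ = 1 := Subtype.ext (mul_inv_cancel₀ hz0)
  have := congrArg ε hmul
  rw [map_mul, map_one] at this
  field_simp at this ⊢
  linear_combination this

lemma place_prod_eq_zero (hplace : ∀ z, z ∉ A → ∃ hz : z⁻¹ ∈ A, ε ⟨z⁻¹, hz⟩ = 0) :
    ∀ {n : ℕ} (z : Fin n → R) (hP : ∏ j, z j ∈ A),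
      ε ⟨∏ j, z j, hP⟩ = 0 → ∃ j, ∃ hj : z j ∈ A, ε ⟨z j, hj⟩ = 0 := by
  intro n
  induction n with
  | zero =>
    intro z hP h
    exfalso
    have h1 : (⟨∏ j, z j, hP⟩ : A) = 1 := Subtype.ext (by simp)
    rw [h1, map_one] at h
    exact one_ne_zero h
  | succ n ih =>
    intro z hP h
    have hsplit : ∏ j, z j = z 0 * ∏ j : Fin n, z j.succ := Fin.prod_univ_succ z
    by_cases h0 : z 0 ∈ A
    · by_cases he0 : ε ⟨z 0, h0⟩ = 0
      · exact ⟨0, h0, he0⟩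
      · obtain ⟨hinv, heinv⟩ := place_inv_mem hplace h0 he0
        have hz0 : z 0 ≠ 0 := by
          rintro h00
          exact he0 (by rw [show (⟨z 0, h0⟩ : A) = 0 from Subtype.ext h00, map_zero])
        have hrest_eq : (z 0)⁻¹ * ∏ j, z j = ∏ j : Fin n, z j.succ := by
          rw [hsplit, ← mul_assoc, inv_mul_cancel₀ hz0, one_mul]
        have hrest : ∏ j : Fin n, z j.succ ∈ A := by
          rw [← hrest_eq]; exact A.mul_mem hinv hP
        have herest : ε ⟨∏ j : Fin n, z j.succ, hrest⟩ = 0 := by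
          have : (⟨∏ j : Fin n, z j.succ, hrest⟩ : A)
              = ⟨(z 0)⁻¹, hinv⟩ * ⟨∏ j, z j, hP⟩ := Subtype.ext hrest_eq.symm
          rw [this, map_mul, h, mul_zero]
        obtain ⟨j, hj, hje⟩ := ih _ hrest herest
        exact ⟨j.succ, hj, hje⟩
    · obtain ⟨hinv, heinv⟩ := hplace _ h0
      have hz0 : z 0 ≠ 0 := fun h00 => h0 (h00 ▸ A.zero_mem)
      have hrest_eq : (z 0)⁻¹ * ∏ j, z j = ∏ j : Fin n, z j.succ := by
        rw [hsplit, ← mul_assoc, inv_mul_cancel₀ hz0, one_mul]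
      have hrest : ∏ j : Fin n, z j.succ ∈ A := by
        rw [← hrest_eq]; exact A.mul_mem hinv hP
      have herest : ε ⟨∏ j : Fin n, z j.succ, hrest⟩ = 0 := by
        have : (⟨∏ j : Fin n, z j.succ, hrest⟩ : A)
            = ⟨(z 0)⁻¹, hinv⟩ * ⟨∏ j, z j, hP⟩ := Subtype.ext hrest_eq.symm
        rw [this, map_mul, heinv, zero_mul]
      obtain ⟨j, hj, hje⟩ := ih _ hrest herest
      exact ⟨j.succ, hj, hje⟩

end helpers

set_option maxHeartbeats 2000000 in
set_option synthInstance.maxHeartbeats 400000 in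
/-- Let `f ∈ K[T_2,…,T_r][T_1]` have positive `T_1`-degree, and let `x = (x₁, x')` be a point
over `K̄` with `f(x) = 0` and `LC_{T_1}(f)(x') ≠ 0`.  Write `f = c·∏(T_1 - t_j)` over the
algebraic closure `L̄` of `L = K(T_2,…,T_r)` and let `ε` be a place of `L̄` over `K̄`
extending evaluation at `x'`.  Then some root `t_j` lies in the valuation ring of `ε` and
`ε(t_j) = x₁`. -/
theorem root_specializes_along_place {K : Type*} [Field K] {m : ℕ}
    (f : Polynomial (MvPolynomial (Fin m) K))
    (hdeg : 0 < f.natDegree)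
    (x₁ : AlgebraicClosure K) (x' : Fin m → AlgebraicClosure K)
    (ha : MvPolynomial.aeval x' f.leadingCoeff ≠ 0)
    (hfx : Polynomial.eval x₁
      (f.map ((MvPolynomial.aeval x' :
        MvPolynomial (Fin m) K →ₐ[K] AlgebraicClosure K) : MvPolynomial (Fin m) K →+*
          AlgebraicClosure K)) = 0)
    {n : ℕ} (t : Fin n → AlgebraicClosure (FractionRing (MvPolynomial (Fin m) K)))
    (c : AlgebraicClosure (FractionRing (MvPolynomial (Fin m) K))) (hc : c ≠ 0)
    (hfactor : f.map (((algebraMap (FractionRing (MvPolynomial (Fin m) K))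
          (AlgebraicClosure (FractionRing (MvPolynomial (Fin m) K)))).comp
        (algebraMap (MvPolynomial (Fin m) K) (FractionRing (MvPolynomial (Fin m) K))))) =
      Polynomial.C c * ∏ j, (Polynomial.X - Polynomial.C (t j)))
    (φ : AlgebraicClosure K →+* AlgebraicClosure (FractionRing (MvPolynomial (Fin m) K)))
    (A : Subring (AlgebraicClosure (FractionRing (MvPolynomial (Fin m) K))))
    (ε : A →+* AlgebraicClosure K)
    (hplace : ∀ z, z ∉ A → ∃ hz : z⁻¹ ∈ A, ε ⟨z⁻¹, hz⟩ = 0)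
    (hφ : ∀ a : AlgebraicClosure K, ∃ h : φ a ∈ A, ε ⟨φ a, h⟩ = a)
    (heval : ∀ p : MvPolynomial (Fin m) K,
      ∃ h : ((algebraMap (FractionRing (MvPolynomial (Fin m) K))
          (AlgebraicClosure (FractionRing (MvPolynomial (Fin m) K)))).comp
        (algebraMap (MvPolynomial (Fin m) K) (FractionRing (MvPolynomial (Fin m) K)))) p ∈ A,
        ε ⟨_, h⟩ = MvPolynomial.aeval x' p) :
    ∃ j, ∃ hj : t j ∈ A, ε ⟨t j, hj⟩ = x₁ := by
  set ψ : MvPolynomial (Fin m) K →+*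
      AlgebraicClosure (FractionRing (MvPolynomial (Fin m) K)) :=
    (algebraMap (FractionRing (MvPolynomial (Fin m) K))
      (AlgebraicClosure (FractionRing (MvPolynomial (Fin m) K)))).comp
      (algebraMap (MvPolynomial (Fin m) K) (FractionRing (MvPolynomial (Fin m) K))) with hψ
  -- ψ is injective
  have hψinj : Function.Injective ψ :=
    (algebraMap (FractionRing (MvPolynomial (Fin m) K))
      (AlgebraicClosure (FractionRing (MvPolynomial (Fin m) K)))).injective.comp
      (IsFractionRing.injective (MvPolynomial (Fin m) K)
        (FractionRing (MvPolynomial (Fin m) K)))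
  -- the ring hom into A
  let ρ : MvPolynomial (Fin m) K →+* A :=
    { toFun := fun p => ⟨ψ p, (heval p).1⟩
      map_one' := Subtype.ext (map_one ψ)
      map_mul' := fun p q => Subtype.ext (map_mul ψ p q)
      map_zero' := Subtype.ext (map_zero ψ)
      map_add' := fun p q => Subtype.ext (map_add ψ p q) }
  have hρval : ∀ p, ((ρ p : A) :
      AlgebraicClosure (FractionRing (MvPolynomial (Fin m) K))) = ψ p := fun p => rfl
  have hερ : ∀ p, ε (ρ p) = MvPolynomial.aeval x' p := fun p => (heval p).2
  obtain ⟨hφx, hεφx⟩ := hφ x₁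
  set e : A := f.eval₂ ρ ⟨φ x₁, hφx⟩ with he
  -- coercion of e
  have hecoe : (e : AlgebraicClosure (FractionRing (MvPolynomial (Fin m) K)))
      = c * ∏ j, (φ x₁ - t j) := by
    have h1 : (e : AlgebraicClosure (FractionRing (MvPolynomial (Fin m) K)))
        = f.eval₂ (A.subtype.comp ρ) (φ x₁) :=
      Polynomial.hom_eval₂ f ρ A.subtype ⟨φ x₁, hφx⟩
    have h2 : A.subtype.comp ρ = ψ := RingHom.ext fun p => rfl
    rw [h1, h2, ← Polynomial.eval_map, hfactor]
    simp [Polynomial.eval_prod]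
  -- ε e = 0
  have hεe : ε e = 0 := by
    have h1 : ε e = f.eval₂ (ε.comp ρ) (ε ⟨φ x₁, hφx⟩) :=
      Polynomial.hom_eval₂ f ρ ε ⟨φ x₁, hφx⟩
    have h2 : ε.comp ρ = ((MvPolynomial.aeval x' :
        MvPolynomial (Fin m) K →ₐ[K] AlgebraicClosure K) : MvPolynomial (Fin m) K →+*
          AlgebraicClosure K) := RingHom.ext fun p => hερ p
    rw [h1, h2, hεφx, ← Polynomial.eval_map, hfx]
  -- c is the image of the leading coefficient
  have hcψ : c = ψ f.leadingCoeff := by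
    have hlhs := congrArg Polynomial.leadingCoeff hfactor
    rw [Polynomial.leadingCoeff_mul, Polynomial.leadingCoeff_C] at hlhs
    have hm : (∏ j, (Polynomial.X - Polynomial.C (t j))).Monic :=
      Polynomial.monic_prod_of_monic _ _ fun j _ => Polynomial.monic_X_sub_C (t j)
    rw [hm.leadingCoeff, mul_one] at hlhs
    rw [← hlhs, Polynomial.leadingCoeff_map_of_injective hψinj]
  have hcA : c ∈ A := hcψ ▸ (heval f.leadingCoeff).1
  have hεc : ε ⟨c, hcA⟩ ≠ 0 := by
    have : (⟨c, hcA⟩ : A) = ρ f.leadingCoeff := Subtype.ext hcψ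
    rw [this, hερ]
    exact ha
  obtain ⟨hcinv, hεcinv⟩ := place_inv_mem hplace hcA hεc
  have hcne : c ≠ 0 := hc
  -- the product is in A with ε = 0
  have hPeq : c⁻¹ * (c * ∏ j, (φ x₁ - t j)) = ∏ j, (φ x₁ - t j) := by
    rw [← mul_assoc, inv_mul_cancel₀ hcne, one_mul]
  have hP : ∏ j, (φ x₁ - t j) ∈ A := by
    rw [← hPeq]
    exact A.mul_mem hcinv (hecoe ▸ e.2)
  have hεP : ε ⟨∏ j, (φ x₁ - t j), hP⟩ = 0 := by
    have : (⟨∏ j, (φ x₁ - t j), hP⟩ : A) = ⟨c⁻¹, hcinv⟩ * e := by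
      refine Subtype.ext ?_
      show (∏ j, (φ x₁ - t j))
        = c⁻¹ * (e : AlgebraicClosure (FractionRing (MvPolynomial (Fin m) K)))
      rw [hecoe, ← mul_assoc, inv_mul_cancel₀ hcne, one_mul]
    rw [this, map_mul, hεe, mul_zero]
  obtain ⟨j, hj, hje⟩ := place_prod_eq_zero hplace _ hP hεP
  have htj : t j ∈ A := by
    have : t j = φ x₁ - (φ x₁ - t j) := by ring
    rw [this]
    exact A.sub_mem hφx hj
  refine ⟨j, htj, ?_⟩
  have : (⟨t j, htj⟩ : A) = ⟨φ x₁, hφx⟩ - ⟨φ x₁ - t j, hj⟩ := by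
    refine Subtype.ext ?_
    show t j = φ x₁ - (φ x₁ - t j)
    ring
  rw [this, RingHom.map_sub, hεφx, hje, sub_zero]
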